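/- For fixed h > 0, σ² > 0, λ > 0, μ > 0, α ∈ (0,1], t ∈ ℝ, the function F(p) = −μ·p − (λ/α)·( t − log(1 + h·p/σ²) )₊ on p ≥ 0 attains its supremum at p* = [λ/(μα) − σ²/h]₊ when λ/(μα·e^t) − σ²/h < 0, and at p* = σ²(e^t − 1)/h when λ/(μα·e^t) − σ²/h ≥ 0. -/

import Mathlib

open Real

theorem tail_waterfilling_optimal (h σ2 lam mu α t : ℝ)
    (hh : 0 < h) (hσ : 0 < σ2) (hlam : 0 < lam) (hmu : 0 < mu)
    (hα : 0 < α) (hα1 : α ≤ 1) :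
    (∀ F : ℝ → ℝ,
      (F = fun p => -mu * p - (lam / α) * max (t - Real.log (1 + h * p / σ2)) 0) →
      ((lam / (mu * α * Real.exp t) - σ2 / h < 0 →
          ∀ p, 0 ≤ p → F p ≤ F (max (lam / (mu * α) - σ2 / h) 0)) ∧
       (0 ≤ lam / (mu * α * Real.exp t) - σ2 / h →
          ∀ p, 0 ≤ p → F p ≤ F (σ2 * (Real.exp t - 1) / h)))) := by
  intro F hF
  subst hF
  simp only
  have hc0 : 0 < lam / α := div_pos hlam hα
  have hσ' : σ2 ≠ 0 := ne_of_gt hσ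
  have hh' : h ≠ 0 := ne_of_gt hh
  have hmu' : mu ≠ 0 := ne_of_gt hmu
  have hα' : α ≠ 0 := ne_of_gt hα
  have het : 0 < Real.exp t := Real.exp_pos t
  constructor
  · -- case 1 : interior optimum
    intro hcond p hp
    have hx0 : (0:ℝ) < 1 + h * p / σ2 := by positivity
    have hx1 : (1:ℝ) ≤ 1 + h * p / σ2 := by
      have : 0 ≤ h * p / σ2 := by positivity
      linarith
    have hlogx0 : 0 ≤ Real.log (1 + h * p / σ2) := Real.log_nonneg hx1
    have hM1 : t - Real.log (1 + h * p / σ2) ≤ max (t - Real.log (1 + h * p / σ2)) 0 :=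
      le_max_left _ _
    have hM0 : (0:ℝ) ≤ max (t - Real.log (1 + h * p / σ2)) 0 := le_max_right _ _
    rcases le_total (lam / (mu * α) - σ2 / h) 0 with hA | hB
    · -- p* = 0
      rw [max_eq_right hA]
      have h0 : 1 + h * 0 / σ2 = 1 := by ring
      rw [h0, Real.log_one, sub_zero]
      have hch : lam / α * h ≤ mu * σ2 := by
        rw [sub_nonpos, div_le_div_iff₀ (by positivity) hh] at hA
        rw [div_mul_eq_mul_div, div_le_iff₀ hα]
        nlinarith
      have hlogxle : Real.log (1 + h * p / σ2) ≤ h * p / σ2 := by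
        have := Real.log_le_sub_one_of_pos hx0
        linarith
      have hcl : lam / α * Real.log (1 + h * p / σ2) ≤ mu * p := by
        have h1 : lam / α * Real.log (1 + h * p / σ2) ≤ lam / α * (h * p / σ2) :=
          mul_le_mul_of_nonneg_left hlogxle (le_of_lt hc0)
        have h2 : lam / α * (h * p / σ2) ≤ mu * p := by
          rw [mul_div_assoc' , div_le_iff₀ hσ]
          nlinarith
        linarith
      have hmax : max t 0 ≤ max (t - Real.log (1 + h * p / σ2)) 0
          + Real.log (1 + h * p / σ2) := by
        apply max_le
        · linarith
        · linarith
      linarith [mul_le_mul_of_nonneg_left hmax (le_of_lt hc0)]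
    · -- p* = lam/(mu α) - σ2/h
      rw [max_eq_left hB]
      set K : ℝ := lam * h / (mu * α * σ2) with hKdef
      have hK0 : 0 < K := by positivity
      have hxstar : 1 + h * (lam / (mu * α) - σ2 / h) / σ2 = K := by
        rw [hKdef, mul_comm mu α, ← div_div]
        field_simp
        ring
      rw [hxstar]
      have hKle : K ≤ Real.exp t := by
        rw [sub_neg, div_lt_div_iff₀ (by positivity) hh] at hcond
        rw [hKdef, div_le_iff₀ (by positivity)]
        nlinarith
      have hlogK : Real.log K ≤ t := by
        rw [Real.log_le_iff_le_exp hK0]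
        exact hKle
      rw [max_eq_left (by linarith : (0:ℝ) ≤ t - Real.log K)]
      -- key inequality: c * (log X - log K) ≤ mu * (p - p*)
      have hdiv : Real.log (1 + h * p / σ2) - Real.log K ≤ (1 + h * p / σ2) / K - 1 := by
        have h1 := Real.log_le_sub_one_of_pos (div_pos hx0 hK0)
        rwa [Real.log_div (ne_of_gt hx0) (ne_of_gt hK0)] at h1
      have hexact : lam / α * ((1 + h * p / σ2) / K - 1)
          = mu * (p - (lam / (mu * α) - σ2 / h)) := by
        rw [hKdef]
        field_simp
        ring
      have hchain : lam / α * (Real.log (1 + h * p / σ2) - Real.log K)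
          ≤ mu * (p - (lam / (mu * α) - σ2 / h)) := by
        calc lam / α * (Real.log (1 + h * p / σ2) - Real.log K)
            ≤ lam / α * ((1 + h * p / σ2) / K - 1) :=
              mul_le_mul_of_nonneg_left hdiv (le_of_lt hc0)
          _ = mu * (p - (lam / (mu * α) - σ2 / h)) := hexact
      linarith [mul_le_mul_of_nonneg_left hM1 (le_of_lt hc0)]
  · -- case 2 : boundary-of-kink optimum
    intro hcond p hp
    have hx0 : (0:ℝ) < 1 + h * p / σ2 := by positivity
    have hM1 : t - Real.log (1 + h * p / σ2) ≤ max (t - Real.log (1 + h * p / σ2)) 0 :=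
      le_max_left _ _
    have hM0 : (0:ℝ) ≤ max (t - Real.log (1 + h * p / σ2)) 0 := le_max_right _ _
    have hxt : 1 + h * (σ2 * (Real.exp t - 1) / h) / σ2 = Real.exp t := by
      field_simp
      ring
    rw [hxt, Real.log_exp, sub_self, max_self, mul_zero, sub_zero]
    have hkey : mu * σ2 * Real.exp t ≤ lam / α * h := by
      rw [sub_nonneg, div_le_div_iff₀ hh (by positivity)] at hcond
      rw [div_mul_eq_mul_div, le_div_iff₀ hα]
      nlinarith
    rcases le_total p (σ2 * (Real.exp t - 1) / h) with hle | hge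
    · -- p ≤ p_t : use the linear lower bound on the log gap
      have hdiv : Real.log (1 + h * p / σ2) - t ≤ (1 + h * p / σ2) / Real.exp t - 1 := by
        have h1 := Real.log_le_sub_one_of_pos (div_pos hx0 het)
        rwa [Real.log_div (ne_of_gt hx0) (ne_of_gt het), Real.log_exp] at h1
      have hstep : lam / α * ((1 + h * p / σ2) / Real.exp t - 1)
          ≤ mu * (p - σ2 * (Real.exp t - 1) / h) := by
        set q : ℝ := σ2 * (Real.exp t - 1) / h with hq
        have hd : 0 ≤ q - p := by linarith
        have hXe : (1 + h * p / σ2) / Real.exp t - 1 = h * (p - q) / (σ2 * Real.exp t) := by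
          rw [hq]
          field_simp
          ring
        rw [hXe, ← mul_div_assoc, div_le_iff₀ (by positivity : (0:ℝ) < σ2 * Real.exp t)]
        nlinarith [mul_nonneg (sub_nonneg.mpr hkey) hd]
      have hchain : lam / α * (Real.log (1 + h * p / σ2) - t)
          ≤ mu * (p - σ2 * (Real.exp t - 1) / h) := by
        calc lam / α * (Real.log (1 + h * p / σ2) - t)
            ≤ lam / α * ((1 + h * p / σ2) / Real.exp t - 1) :=
              mul_le_mul_of_nonneg_left hdiv (le_of_lt hc0)
          _ ≤ _ := hstep
      linarith [mul_le_mul_of_nonneg_left hM1 (le_of_lt hc0)]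
    · -- p_t ≤ p : max term vanishes
      have hXe : Real.exp t ≤ 1 + h * p / σ2 := by
        have : 1 + h * p / σ2 - Real.exp t = h * (p - σ2 * (Real.exp t - 1) / h) / σ2 := by
          field_simp
          ring
        nlinarith [div_nonneg (mul_nonneg (le_of_lt hh) (sub_nonneg.mpr hge)) (le_of_lt hσ)]
      have : max (t - Real.log (1 + h * p / σ2)) 0 = 0 := by
        apply max_eq_right
        have := (Real.le_log_iff_exp_le hx0).mpr hXe
        linarith
      rw [this, mul_zero, sub_zero]
      linarith [mul_le_mul_of_nonneg_left hge (le_of_lt hmu)]
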